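/- For any f : ∏_{n=1}^N Fin I_n → ℝ with positive total variance D := E[f²] − (E[f])² > 0, the Sobol indices S_α := D_α / D (with D_α := E[f_α²]) satisfy Σ over all nonempty α ⊆ {1,...,N} of S_α = 1. -/
import Mathlib


open Finset

/-- Partial expectation `E_{-α}[f]` with respect to the product weights `w`:
sum over all points agreeing with `x` on `α`, weighted by the complement weights. -/
noncomputable def partialE {N : ℕ} {I : Fin N → ℕ} (w : ∀ n : Fin N, Fin (I n) → ℝ)
    (α : Finset (Fin N)) (f : ((n : Fin N) → Fin (I n)) → ℝ)
    (x : (n : Fin N) → Fin (I n)) : ℝ :=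
  ∑ y ∈ Finset.univ.filter (fun y : (n : Fin N) → Fin (I n) => ∀ m ∈ α, y m = x m),
    (∏ m ∈ αᶜ, w m (y m)) * f y

/-- The ANOVA (Sobol) terms, defined by the recursion
`f_α(x) = E_{-α}[f](x_α) - Σ_{β ⊊ α} f_β(x_β)` (so `f_∅ = E[f]`). -/
noncomputable def anova {N : ℕ} {I : Fin N → ℕ} (w : ∀ n : Fin N, Fin (I n) → ℝ)
    (f : ((n : Fin N) → Fin (I n)) → ℝ) (α : Finset (Fin N))
    (x : (n : Fin N) → Fin (I n)) : ℝ :=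
  partialE w α f x - ∑ β ∈ (α.powerset.erase α).attach, anova w f β.1 x
termination_by α.card
decreasing_by
  have h := Finset.mem_erase.mp β.2
  exact Finset.card_lt_card (lt_of_le_of_ne (Finset.mem_powerset.mp h.2) h.1)

variable {N : ℕ} {I : Fin N → ℕ} (w : ∀ n : Fin N, Fin (I n) → ℝ)
  (f : ((n : Fin N) → Fin (I n)) → ℝ)

lemma anova_eq (α : Finset (Fin N)) (x : (n : Fin N) → Fin (I n)) :
    anova w f α x = partialE w α f x - ∑ β ∈ α.powerset.erase α, anova w f β x := by
  rw [anova]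
  rw [← Finset.sum_attach (α.powerset.erase α) (fun β => anova w f β x)]

lemma sum_powerset_anova (α : Finset (Fin N)) (x : (n : Fin N) → Fin (I n)) :
    ∑ β ∈ α.powerset, anova w f β x = partialE w α f x := by
  have h : α ∈ α.powerset := Finset.mem_powerset_self α
  rw [← Finset.insert_erase h, Finset.sum_insert (Finset.notMem_erase _ _), anova_eq]
  ring

lemma partialE_congr {α : Finset (Fin N)} {x x' : (n : Fin N) → Fin (I n)}
    (h : ∀ m ∈ α, x m = x' m) : partialE w α f x = partialE w α f x' := by
  unfold partialE
  apply Finset.sum_congr _ (fun _ _ => rfl)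
  apply Finset.filter_congr
  intro y _
  constructor
  · intro hy m hm; rw [hy m hm, h m hm]
  · intro hy m hm; rw [hy m hm, h m hm]

lemma anova_congr (α : Finset (Fin N)) {x x' : (n : Fin N) → Fin (I n)}
    (h : ∀ m ∈ α, x m = x' m) : anova w f α x = anova w f α x' := by
  induction α using Finset.strongInduction with
  | _ α ih =>
    rw [anova_eq, anova_eq, partialE_congr w f h]
    congr 1
    apply Finset.sum_congr rfl
    intro β hβ
    have hβ' := Finset.mem_erase.mp hβ
    have hss : β ⊂ α := lt_of_le_of_ne (Finset.mem_powerset.mp hβ'.2) hβ'.1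
    exact ih β hss (fun m hm => h m (hss.1 hm))

lemma key_partialE {α : Finset (Fin N)} {m : Fin N} (hm : m ∈ α)
    (x : (n : Fin N) → Fin (I n)) :
    ∑ i, w m i * partialE w α f (Function.update x m i)
      = partialE w (α.erase m) f x := by
  unfold partialE
  rw [← Finset.sum_fiberwise (Finset.univ.filter fun y : (n : Fin N) → Fin (I n) =>
      ∀ k ∈ α.erase m, y k = x k) (fun y => y m)
      (fun y => (∏ n ∈ (α.erase m)ᶜ, w n (y n)) * f y)]
  apply Finset.sum_congr rfl
  intro i _
  rw [Finset.mul_sum, Finset.filter_filter]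
  have hfil : (Finset.univ.filter fun y : (n : Fin N) → Fin (I n) =>
      ∀ k ∈ α, y k = Function.update x m i k)
      = Finset.univ.filter fun y => (∀ k ∈ α.erase m, y k = x k) ∧ y m = i := by
    apply Finset.filter_congr; intro y _
    constructor
    · intro h
      refine ⟨fun k hk => ?_, ?_⟩
      · have hk' := Finset.mem_erase.mp hk
        rw [h k hk'.2, Function.update_of_ne hk'.1]
      · rw [h m hm, Function.update_self]
    · rintro ⟨h1, h2⟩ k hk
      by_cases hkm : k = m
      · subst hkm; rw [h2, Function.update_self]
      · rw [Function.update_of_ne hkm, h1 k (Finset.mem_erase.mpr ⟨hkm, hk⟩)]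
  rw [hfil]
  apply Finset.sum_congr rfl
  intro y hy
  have hy' := Finset.mem_filter.mp hy
  have hcompl : (α.erase m)ᶜ = insert m αᶜ := by
    ext k
    simp only [Finset.mem_compl, Finset.mem_erase, Finset.mem_insert]
    tauto
  rw [hcompl, Finset.prod_insert (by simp [hm] : m ∉ αᶜ), hy'.2.2]
  ring

lemma sum_update_anova (hw1 : ∀ n, ∑ i, w n i = 1) {α : Finset (Fin N)} {m : Fin N}
    (hm : m ∈ α) (x : (n : Fin N) → Fin (I n)) :
    ∑ i, w m i * anova w f α (Function.update x m i) = 0 := by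
  induction α using Finset.strongInduction with
  | _ α ih =>
  have hexp : ∀ i, w m i * anova w f α (Function.update x m i)
      = w m i * partialE w α f (Function.update x m i)
        - ∑ β ∈ α.powerset.erase α, w m i * anova w f β (Function.update x m i) := by
    intro i; rw [anova_eq, mul_sub, Finset.mul_sum]
  rw [Finset.sum_congr rfl (fun i _ => hexp i), Finset.sum_sub_distrib,
    key_partialE w f hm, Finset.sum_comm]
  have hterm : ∀ β ∈ α.powerset.erase α,
      (∑ i, w m i * anova w f β (Function.update x m i))
      = if m ∈ β then 0 else anova w f β x := by
    intro β hβ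
    have hβ' := Finset.mem_erase.mp hβ
    by_cases hmβ : m ∈ β
    · rw [if_pos hmβ]
      exact ih β (lt_of_le_of_ne (Finset.mem_powerset.mp hβ'.2) hβ'.1) hmβ
    · rw [if_neg hmβ]
      have : ∀ i, anova w f β (Function.update x m i) = anova w f β x := by
        intro i
        apply anova_congr
        intro k hk
        exact Function.update_of_ne (fun h => hmβ (by rwa [h] at hk)) _ _
      rw [Finset.sum_congr rfl (fun i _ => by rw [this i]), ← Finset.sum_mul, hw1 m, one_mul]
  rw [Finset.sum_congr rfl hterm, Finset.sum_ite, Finset.sum_const_zero, zero_add]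
  have hset : (α.powerset.erase α).filter (fun β => ¬ m ∈ β) = (α.erase m).powerset := by
    ext β
    simp only [Finset.mem_filter, Finset.mem_erase, Finset.mem_powerset, Finset.subset_erase]
    constructor
    · rintro ⟨⟨hne, hsub⟩, hnm⟩; exact ⟨hsub, hnm⟩
    · rintro ⟨hsub, hnm⟩
      exact ⟨⟨fun h => hnm (h ▸ hm), hsub⟩, hnm⟩
  rw [hset, sum_powerset_anova, sub_self]

lemma orth_aux (hI : ∀ n, 1 ≤ I n) (hw1 : ∀ n, ∑ i, w n i = 1)
    {α : Finset (Fin N)} {m : Fin N} (hm : m ∈ α)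
    (g : ((n : Fin N) → Fin (I n)) → ℝ)
    (hg : ∀ x i, g (Function.update x m i) = g x) :
    ∑ x : (n : Fin N) → Fin (I n), (∏ n, w n (x n)) * (anova w f α x * g x) = 0 := by
  classical
  set e := Equiv.piSplitAt m (fun n => Fin (I n)) with he
  rw [← Equiv.sum_comp e.symm
    (fun x => (∏ n, w n (x n)) * (anova w f α x * g x)), Fintype.sum_prod_type,
    Finset.sum_comm]
  apply Finset.sum_eq_zero
  intro y _
  set x0 : (n : Fin N) → Fin (I n) := e.symm (⟨0, hI m⟩, y) with hx0
  have hupd : ∀ i, e.symm (i, y) = Function.update x0 m i := by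
    intro i
    funext n
    by_cases hn : n = m
    · subst hn
      simp [hx0, he, Equiv.piSplitAt, Function.update_self]
    · simp [hx0, he, Equiv.piSplitAt, Function.update_of_ne hn, hn]
  have hprod : ∀ i, (∏ n, w n (Function.update x0 m i n))
      = w m i * ∏ n ∈ ({m} : Finset (Fin N))ᶜ, w n (x0 n) := by
    intro i
    rw [Fintype.prod_eq_mul_prod_compl m, Function.update_self]
    congr 1
    apply Finset.prod_congr rfl
    intro n hn
    rw [Function.update_of_ne (Finset.notMem_singleton.mp (Finset.mem_compl.mp hn))]
  have : ∀ i, (fun x => (∏ n, w n (x n)) * (anova w f α x * g x)) (e.symm (i, y))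
      = ((∏ n ∈ ({m} : Finset (Fin N))ᶜ, w n (x0 n)) * g x0)
        * (w m i * anova w f α (Function.update x0 m i)) := by
    intro i
    simp only [hupd i, hprod i, hg x0 i]
    ring
  rw [Finset.sum_congr rfl (fun i _ => this i), ← Finset.mul_sum,
    sum_update_anova w f hw1 hm, mul_zero]

lemma anova_orth (hI : ∀ n, 1 ≤ I n) (hw1 : ∀ n, ∑ i, w n i = 1)
    {α β : Finset (Fin N)} (hne : α ≠ β) :
    ∑ x : (n : Fin N) → Fin (I n),
      (∏ n, w n (x n)) * (anova w f α x * anova w f β x) = 0 := by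
  have key : ∀ (γ δ : Finset (Fin N)) (m : Fin N), m ∈ γ → m ∉ δ →
      ∑ x : (n : Fin N) → Fin (I n),
        (∏ n, w n (x n)) * (anova w f γ x * anova w f δ x) = 0 := by
    intro γ δ m hmγ hmδ
    apply orth_aux w f hI hw1 hmγ
    intro x i
    apply anova_congr
    intro k hk
    exact Function.update_of_ne (fun h => hmδ (by rwa [h] at hk)) _ _
  by_cases h : ∃ m ∈ α, m ∉ β
  · obtain ⟨m, h1, h2⟩ := h; exact key α β m h1 h2
  · push_neg at h
    have hex : ∃ m ∈ β, m ∉ α := by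
      by_contra hc; push_neg at hc
      exact hne (Finset.Subset.antisymm h hc)
    obtain ⟨m, h1, h2⟩ := hex
    have h0 := key β α m h1 h2
    have hswap : ∀ x : (n : Fin N) → Fin (I n),
        (∏ n, w n (x n)) * (anova w f α x * anova w f β x)
        = (∏ n, w n (x n)) * (anova w f β x * anova w f α x) := fun x => by ring
    rw [Finset.sum_congr rfl (fun x _ => hswap x)]
    exact h0

lemma anova_decomp (x : (n : Fin N) → Fin (I n)) :
    f x = ∑ α : Finset (Fin N), anova w f α x := by
  have h1 : partialE w Finset.univ f x = f x := by
    unfold partialE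
    have hfil : (Finset.univ.filter fun y : (n : Fin N) → Fin (I n) =>
        ∀ m ∈ Finset.univ, y m = x m) = {x} := by
      ext y
      simp only [Finset.mem_filter, Finset.mem_univ, true_and, Finset.mem_singleton]
      constructor
      · intro h; funext n; exact h n trivial
      · intro h n _; rw [h]
    rw [hfil, Finset.sum_singleton, Finset.compl_univ, Finset.prod_empty, one_mul]
  rw [← Finset.powerset_univ, sum_powerset_anova, h1]

lemma anova_empty (x : (n : Fin N) → Fin (I n)) :
    anova w f ∅ x = ∑ y : (n : Fin N) → Fin (I n), (∏ n, w n (y n)) * f y := by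
  rw [anova_eq]
  have h2 : (∅ : Finset (Fin N)).powerset.erase ∅ = ∅ := by simp
  rw [h2, Finset.sum_empty, sub_zero]
  unfold partialE
  have hfil : (Finset.univ.filter fun y : (n : Fin N) → Fin (I n) =>
      ∀ m ∈ (∅ : Finset (Fin N)), y m = x m) = Finset.univ := by
    apply Finset.filter_true_of_mem; intro y _ m hm; exact absurd hm (Finset.notMem_empty m)
  rw [hfil, Finset.compl_empty]

lemma total_mass (hw1 : ∀ n, ∑ i, w n i = 1) :
    ∑ x : (n : Fin N) → Fin (I n), ∏ n, w n (x n) = 1 := by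
  rw [← Fintype.prod_sum]
  simp [hw1]


/-- if the total variance `D = E[f²] - (E[f])²` is positive, the Sobol
indices `S_α = D_α / D` over all nonempty `α` sum to `1`. -/
theorem sobol_indices_sum_to_one
    {N : ℕ} (hN : 1 ≤ N) {I : Fin N → ℕ} (hI : ∀ n, 1 ≤ I n)
    (w : ∀ n : Fin N, Fin (I n) → ℝ)
    (hw0 : ∀ n i, 0 ≤ w n i) (hw1 : ∀ n, ∑ i, w n i = 1)
    (f : ((n : Fin N) → Fin (I n)) → ℝ)
    (D : ℝ)
    (hD : D = (∑ x : (n : Fin N) → Fin (I n), (∏ n, w n (x n)) * f x ^ 2)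
      - (∑ x : (n : Fin N) → Fin (I n), (∏ n, w n (x n)) * f x) ^ 2)
    (hDpos : 0 < D) :
    ∑ α ∈ (Finset.univ : Finset (Finset (Fin N))).erase ∅,
      (∑ x : (n : Fin N) → Fin (I n), (∏ n, w n (x n)) * anova w f α x ^ 2) / D
    = 1 := by
  classical
  set Dα : Finset (Fin N) → ℝ :=
    fun α => ∑ x : (n : Fin N) → Fin (I n), (∏ n, w n (x n)) * anova w f α x ^ 2 with hDα
  -- E[f²] = Σ_α E[f_α²]
  have step1 : ∀ x : (n : Fin N) → Fin (I n), (∏ n, w n (x n)) * f x ^ 2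
      = ∑ α : Finset (Fin N), ∑ β : Finset (Fin N),
          (∏ n, w n (x n)) * (anova w f α x * anova w f β x) := by
    intro x
    rw [sq, anova_decomp w f x, Finset.sum_mul_sum]
    simp [Finset.mul_sum]
  have hEf2 : (∑ x : (n : Fin N) → Fin (I n), (∏ n, w n (x n)) * f x ^ 2)
      = ∑ α : Finset (Fin N), Dα α := by
    rw [Finset.sum_congr rfl (fun x _ => step1 x), Finset.sum_comm]
    apply Finset.sum_congr rfl
    intro α _
    rw [Finset.sum_comm]
    rw [Finset.sum_eq_single α
      (fun β _ hβ => anova_orth w f hI hw1 (Ne.symm hβ))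
      (fun h => absurd (Finset.mem_univ α) h)]
    apply Finset.sum_congr rfl
    intro x _
    rw [sq]
  -- E[f_∅²] = (E[f])²
  have hE0 : Dα ∅ = (∑ x : (n : Fin N) → Fin (I n), (∏ n, w n (x n)) * f x) ^ 2 := by
    rw [hDα]
    simp only [anova_empty w f]
    rw [← Finset.sum_mul, total_mass w hw1, one_mul]
  -- Σ_{α ≠ ∅} Dα = D
  have hsum : ∑ α ∈ (Finset.univ : Finset (Finset (Fin N))).erase ∅, Dα α = D := by
    have h := Finset.sum_erase_add (Finset.univ : Finset (Finset (Fin N))) Dα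
      (Finset.mem_univ ∅)
    rw [hD, hEf2, ← h, hE0]
    ring
  rw [← Finset.sum_div, hsum, div_self (ne_of_gt hDpos)]
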